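/- Bypassing a reversible Left option preserves equality: if G = {A, B, C, …| G^S | D, E, F, …} and A has a Right option A^R with A^R ≤ G, and the Left options of A^R are {W, X, Y, …}, then G' = {W, X, Y, …, B, C, …| G^S | D, E, F, …} satisfies G = G'. -/

import Mathlib

inductive SGame : Type where
  | mk (left right : List SGame) (score : ℝ)

namespace SGame

def leftOpts : SGame → List SGame | mk L _ _ => L
def rightOpts : SGame → List SGame | mk _ R _ => R
def score : SGame → ℝ | mk _ _ s => s

mutual
  /-- Optimal final score when Left moves first. -/
  def leftScore : SGame → ℝ
    | mk [] _ s => s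
    | mk (g :: L) _ _ => maxRight g L
  termination_by G => sizeOf G
  decreasing_by all_goals (simp; try omega)
  def maxRight : SGame → List SGame → ℝ
    | g, [] => rightScore g
    | g, h :: t => max (rightScore g) (maxRight h t)
  termination_by g l => 1 + sizeOf g + sizeOf l
  decreasing_by all_goals (simp; try omega)
  /-- Optimal final score when Right moves first. -/
  def rightScore : SGame → ℝ
    | mk _ [] s => s
    | mk _ (g :: R) _ => minLeft g R
  termination_by G => sizeOf G
  decreasing_by all_goals (simp; try omega)
  def minLeft : SGame → List SGame → ℝ
    | g, [] => leftScore g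
    | g, h :: t => min (leftScore g) (minLeft h t)
  termination_by g l => 1 + sizeOf g + sizeOf l
  decreasing_by all_goals (simp; try omega)
end

/-- Long-rule disjunctive sum. -/
def sum : SGame → SGame → SGame
  | mk L1 R1 s1, mk L2 R2 s2 =>
    mk ((L1.attach.map fun g => sum g.1 (mk L2 R2 s2)) ++
        (L2.attach.map fun h => sum (mk L1 R1 s1) h.1))
       ((R1.attach.map fun g => sum g.1 (mk L2 R2 s2)) ++
        (R2.attach.map fun h => sum (mk L1 R1 s1) h.1))
       (s1 + s2)
termination_by G H => sizeOf G + sizeOf H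
decreasing_by
  all_goals simp
  · have := List.sizeOf_lt_of_mem g.2; omega
  · have := List.sizeOf_lt_of_mem h.2; omega
  · have := List.sizeOf_lt_of_mem g.2; omega
  · have := List.sizeOf_lt_of_mem h.2; omega

end SGame

namespace SGame

/-- The game `{.|0|.}`. -/
def zero : SGame := mk [] [] 0

/-- Negation: `-G = {-G^R | -G^S | -G^L}`. -/
def neg : SGame → SGame
  | mk L R s =>
    mk (R.attach.map fun g => neg g.1) (L.attach.map fun g => neg g.1) (-s)
termination_by G => sizeOf G
decreasing_by
  all_goals (have := List.sizeOf_lt_of_mem g.2; simp; omega)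

/-- Identity of game trees (options regarded as sets). -/
def Ident : SGame → SGame → Prop
  | mk L1 R1 s1, mk L2 R2 s2 =>
    s1 = s2 ∧
    (∀ g ∈ L1.attach, ∃ h ∈ L2.attach, Ident g.1 h.1) ∧
    (∀ h ∈ L2.attach, ∃ g ∈ L1.attach, Ident g.1 h.1) ∧
    (∀ g ∈ R1.attach, ∃ h ∈ R2.attach, Ident g.1 h.1) ∧
    (∀ h ∈ R2.attach, ∃ g ∈ R1.attach, Ident g.1 h.1)
termination_by G H => sizeOf G + sizeOf H
decreasing_by
  all_goals
    (have := List.sizeOf_lt_of_mem g.2; have := List.sizeOf_lt_of_mem h.2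
     simp; omega)

inductive Outcome : Type where
  | L | R | N | P | T
deriving DecidableEq

/-- The outcome class of a game, determined by the signs of its final scores. -/
noncomputable def outcome (G : SGame) : Outcome :=
  if 0 < G.leftScore then
    (if 0 < G.rightScore then .L else if G.rightScore = 0 then .L else .N)
  else if G.leftScore = 0 then
    (if 0 < G.rightScore then .L else if G.rightScore = 0 then .T else .R)
  else
    (if 0 < G.rightScore then .P else .R)

/-- `G ≥ H`. -/
def Ge (G H : SGame) : Prop :=
  ∀ X : SGame,
    (0 ≤ (H.sum X).leftScore → 0 ≤ (G.sum X).leftScore) ∧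
    (0 ≤ (H.sum X).rightScore → 0 ≤ (G.sum X).rightScore) ∧
    (0 < (H.sum X).leftScore → 0 < (G.sum X).leftScore) ∧
    (0 < (H.sum X).rightScore → 0 < (G.sum X).rightScore)

/-- `G ≤ H`. -/
def Le (G H : SGame) : Prop :=
  ∀ X : SGame,
    ((H.sum X).leftScore ≤ 0 → (G.sum X).leftScore ≤ 0) ∧
    ((H.sum X).rightScore ≤ 0 → (G.sum X).rightScore ≤ 0) ∧
    ((H.sum X).leftScore < 0 → (G.sum X).leftScore < 0) ∧
    ((H.sum X).rightScore < 0 → (G.sum X).rightScore < 0)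

/-- Game equality: same outcome in every disjunctive-sum context. -/
def gameEq (G H : SGame) : Prop :=
  ∀ X : SGame, (G.sum X).outcome = (H.sum X).outcome

end SGame

namespace SGame

/-- Every score in the game tree of `G` satisfies `p`. -/
def AllScores (p : ℝ → Prop) : SGame → Prop
  | mk L R s =>
    p s ∧ (∀ g ∈ L.attach, AllScores p g.1) ∧ (∀ g ∈ R.attach, AllScores p g.1)
termination_by G => sizeOf G
decreasing_by all_goals (have := List.sizeOf_lt_of_mem g.2; simp; omega)

/-- `G ≡ H`: identical underlying game trees, with equal scores at all
termination vertices (vertices at which at least one player has no option,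
i.e. where the play of some disjunctive sum can end). -/
def Equiv : SGame → SGame → Prop
  | mk L1 R1 s1, mk L2 R2 s2 =>
    ((L1 = [] ∨ R1 = []) → s1 = s2) ∧
    (∀ g ∈ L1.attach, ∃ h ∈ L2.attach, Equiv g.1 h.1) ∧
    (∀ h ∈ L2.attach, ∃ g ∈ L1.attach, Equiv g.1 h.1) ∧
    (∀ g ∈ R1.attach, ∃ h ∈ R2.attach, Equiv g.1 h.1) ∧
    (∀ h ∈ R2.attach, ∃ g ∈ R1.attach, Equiv g.1 h.1)
termination_by G H => sizeOf G + sizeOf H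
decreasing_by
  all_goals
    (have := List.sizeOf_lt_of_mem g.2; have := List.sizeOf_lt_of_mem h.2
     simp; omega)

/-- `G` is in canonical form: hereditarily, no dominated and no reversible options. -/
def Canonical : SGame → Prop
  | mk L R s =>
    (∀ A ∈ L, ∀ B ∈ L, A ≠ B → ¬ Ge A B) ∧
    (∀ D ∈ R, ∀ E ∈ R, D ≠ E → ¬ Le D E) ∧
    (∀ A ∈ L, ∀ Ar ∈ A.rightOpts, ¬ Le Ar (mk L R s)) ∧
    (∀ D ∈ R, ∀ Dl ∈ D.leftOpts, ¬ Ge Dl (mk L R s)) ∧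
    (∀ g ∈ L.attach, Canonical g.1) ∧ (∀ g ∈ R.attach, Canonical g.1)
termination_by G => sizeOf G
decreasing_by all_goals (have := List.sizeOf_lt_of_mem g.2; simp; omega)

/-- One reduction step: removing a dominated option or bypassing a reversible
option, at the root or in some subposition. -/
inductive Step : SGame → SGame → Prop where
  | domL {L1 L2 : List SGame} {R : List SGame} {s : ℝ} {B : SGame} (A : SGame)
      (hA : A ∈ L1 ++ L2) (h : Ge A B) :
      Step (mk (L1 ++ B :: L2) R s) (mk (L1 ++ L2) R s)
  | domR {R1 R2 : List SGame} {L : List SGame} {s : ℝ} {E : SGame} (D : SGame)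
      (hD : D ∈ R1 ++ R2) (h : Le D E) :
      Step (mk L (R1 ++ E :: R2) s) (mk L (R1 ++ R2) s)
  | revL {L1 L2 : List SGame} {R : List SGame} {s : ℝ} {A Ar : SGame}
      (hAr : Ar ∈ A.rightOpts) (h : Le Ar (mk (L1 ++ A :: L2) R s)) :
      Step (mk (L1 ++ A :: L2) R s) (mk (L1 ++ Ar.leftOpts ++ L2) R s)
  | revR {R1 R2 : List SGame} {L : List SGame} {s : ℝ} {D Dl : SGame}
      (hDl : Dl ∈ D.leftOpts) (h : Ge Dl (mk L (R1 ++ D :: R2) s)) :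
      Step (mk L (R1 ++ D :: R2) s) (mk L (R1 ++ Dl.rightOpts ++ R2) s)
  | congL {g g' : SGame} {L1 L2 R : List SGame} {s : ℝ} (h : Step g g') :
      Step (mk (L1 ++ g :: L2) R s) (mk (L1 ++ g' :: L2) R s)
  | congR {g g' : SGame} {L R1 R2 : List SGame} {s : ℝ} (h : Step g g') :
      Step (mk L (R1 ++ g :: R2) s) (mk L (R1 ++ g' :: R2) s)

end SGame

namespace SGame

lemma leftScore_nil (R : List SGame) (s : ℝ) : (mk [] R s).leftScore = s := by
  rw [leftScore]

lemma rightScore_nil (L : List SGame) (s : ℝ) : (mk L [] s).rightScore = s := by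
  rw [rightScore]

lemma sum_eq (G H : SGame) : G.sum H =
    mk (G.leftOpts.map (·.sum H) ++ H.leftOpts.map (G.sum ·))
       (G.rightOpts.map (·.sum H) ++ H.rightOpts.map (G.sum ·))
       (G.score + H.score) := by
  cases G with | mk L1 R1 s1 => cases H with | mk L2 R2 s2 =>
  rw [sum]
  simp [leftOpts, rightOpts, score, List.attach_map_val]

end SGame
namespace SGame

lemma le_maxRight : ∀ (g : SGame) (t : List SGame), ∀ h ∈ g :: t, h.rightScore ≤ maxRight g t := by
  intro g t
  induction t generalizing g with
  | nil => intro h hh; simp at hh; subst hh; rw [maxRight]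
  | cons b t ih =>
    intro h hh
    rw [maxRight]
    rcases List.mem_cons.1 hh with rfl | hh
    · exact le_max_of_le_left le_rfl
    · exact le_max_of_le_right (ih b h hh)

lemma maxRight_mem : ∀ (g : SGame) (t : List SGame), ∃ h ∈ g :: t, maxRight g t = h.rightScore := by
  intro g t
  induction t generalizing g with
  | nil => exact ⟨g, by simp, by rw [maxRight]⟩
  | cons b t ih =>
    rw [maxRight]
    rcases ih b with ⟨h, hh, he⟩
    rcases le_total (rightScore g) (maxRight b t) with hc | hc
    · exact ⟨h, List.mem_cons_of_mem _ hh, by rw [max_eq_right hc, he]⟩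
    · exact ⟨g, by simp, by rw [max_eq_left hc]⟩

lemma minLeft_le : ∀ (g : SGame) (t : List SGame), ∀ h ∈ g :: t, minLeft g t ≤ h.leftScore := by
  intro g t
  induction t generalizing g with
  | nil => intro h hh; simp at hh; subst hh; rw [minLeft]
  | cons b t ih =>
    intro h hh
    rw [minLeft]
    rcases List.mem_cons.1 hh with rfl | hh
    · exact min_le_of_left_le le_rfl
    · exact min_le_of_right_le (ih b h hh)

lemma minLeft_mem : ∀ (g : SGame) (t : List SGame), ∃ h ∈ g :: t, minLeft g t = h.leftScore := by
  intro g t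
  induction t generalizing g with
  | nil => exact ⟨g, by simp, by rw [minLeft]⟩
  | cons b t ih =>
    rw [minLeft]
    rcases ih b with ⟨h, hh, he⟩
    rcases le_total (leftScore g) (minLeft b t) with hc | hc
    · exact ⟨g, by simp, by rw [min_eq_left hc]⟩
    · exact ⟨h, List.mem_cons_of_mem _ hh, by rw [min_eq_right hc, he]⟩

lemma rightScore_le_leftScore {G g : SGame} (hg : g ∈ G.leftOpts) : g.rightScore ≤ G.leftScore := by
  cases G with | mk L R s =>
  cases L with
  | nil => simp [leftOpts] at hg
  | cons a t => rw [leftScore]; exact le_maxRight a t g hg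

lemma leftScore_mem {G : SGame} (h : G.leftOpts ≠ []) : ∃ g ∈ G.leftOpts, G.leftScore = g.rightScore := by
  cases G with | mk L R s =>
  cases L with
  | nil => simp [leftOpts] at h
  | cons a t => rw [leftScore]; exact maxRight_mem a t

lemma rightScore_le_leftScore' {G d : SGame} (hd : d ∈ G.rightOpts) : G.rightScore ≤ d.leftScore := by
  cases G with | mk L R s =>
  cases R with
  | nil => simp [rightOpts] at hd
  | cons a t => rw [rightScore]; exact minLeft_le a t d hd

lemma rightScore_mem {G : SGame} (h : G.rightOpts ≠ []) : ∃ d ∈ G.rightOpts, G.rightScore = d.leftScore := by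
  cases G with | mk L R s =>
  cases R with
  | nil => simp [rightOpts] at h
  | cons a t => rw [rightScore]; exact minLeft_mem a t

end SGame
namespace SGame

lemma sizeOf_lt_left {G g : SGame} (h : g ∈ G.leftOpts) : sizeOf g < sizeOf G := by
  cases G with | mk L R s =>
  simp only [leftOpts] at h
  have := List.sizeOf_lt_of_mem h
  simp; omega

lemma sizeOf_lt_right {G g : SGame} (h : g ∈ G.rightOpts) : sizeOf g < sizeOf G := by
  cases G with | mk L R s =>
  simp only [rightOpts] at h
  have := List.sizeOf_lt_of_mem h
  simp; omega

lemma leftScore_of_no_left {G : SGame} (h : G.leftOpts = []) : G.leftScore = G.score := by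
  cases G with | mk L R s =>
  simp only [leftOpts] at h; subst h
  rw [leftScore]; rfl

lemma rightScore_of_no_right {G : SGame} (h : G.rightOpts = []) : G.rightScore = G.score := by
  cases G with | mk L R s =>
  simp only [rightOpts] at h; subst h
  rw [rightScore]; rfl

lemma score_sum (G H : SGame) : (G.sum H).score = G.score + H.score := by
  rw [sum_eq]; rfl

lemma leftOpts_sum (G H : SGame) :
    (G.sum H).leftOpts = G.leftOpts.map (·.sum H) ++ H.leftOpts.map (G.sum ·) := by
  rw [sum_eq]; rfl

lemma rightOpts_sum (G H : SGame) :
    (G.sum H).rightOpts = G.rightOpts.map (·.sum H) ++ H.rightOpts.map (G.sum ·) := by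
  rw [sum_eq]; rfl

end SGame
namespace SGame

/-- Shift lemma. -/
lemma shift_scores (c : ℝ) : ∀ G : SGame,
    (G.sum (mk [] [] c)).leftScore = G.leftScore + c ∧
    (G.sum (mk [] [] c)).rightScore = G.rightScore + c := by
  suffices H : ∀ (n : ℕ) (G : SGame), sizeOf G < n →
      (G.sum (mk [] [] c)).leftScore = G.leftScore + c ∧
      (G.sum (mk [] [] c)).rightScore = G.rightScore + c by
    exact fun G => H (sizeOf G + 1) G (by omega)
  intro n
  induction n with
  | zero => intro G hG; omega
  | succ n ih =>
    intro G hG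
    have hmem : ∀ g ∈ (G.sum (mk [] [] c)).leftOpts, ∃ B ∈ G.leftOpts, g = B.sum (mk [] [] c) := by
      intro g hg
      rw [leftOpts_sum] at hg
      simp only [leftOpts, List.map_nil, List.append_nil, List.mem_map] at hg
      obtain ⟨B, hB, rfl⟩ := hg
      exact ⟨B, hB, rfl⟩
    have hmem' : ∀ g ∈ (G.sum (mk [] [] c)).rightOpts, ∃ B ∈ G.rightOpts, g = B.sum (mk [] [] c) := by
      intro g hg
      rw [rightOpts_sum] at hg
      simp only [rightOpts, List.map_nil, List.append_nil, List.mem_map] at hg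
      obtain ⟨B, hB, rfl⟩ := hg
      exact ⟨B, hB, rfl⟩
    constructor
    · by_cases hnil : G.leftOpts = []
      case pos =>
        have hnil2 : (G.sum (mk [] [] c)).leftOpts = [] := by
          rw [leftOpts_sum, hnil]; simp [leftOpts]
        rw [leftScore_of_no_left hnil, leftScore_of_no_left hnil2, score_sum]; rfl
      case neg =>
        have hne : G.leftOpts ≠ [] := hnil
        have hne2 : (G.sum (mk [] [] c)).leftOpts ≠ [] := by
          rw [leftOpts_sum]
          simp only [ne_eq, List.append_eq_nil_iff, List.map_eq_nil_iff]
          intro ⟨h1, _⟩; exact hne h1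
        apply le_antisymm
        · obtain ⟨g, hg, he⟩ := leftScore_mem hne2
          obtain ⟨B, hB, rfl⟩ := hmem g hg
          rw [he, (ih B (by have := sizeOf_lt_left hB; omega)).2]
          have := rightScore_le_leftScore hB
          linarith
        · obtain ⟨B, hB, he⟩ := leftScore_mem hne
          have hmemB : B.sum (mk [] [] c) ∈ (G.sum (mk [] [] c)).leftOpts := by
            rw [leftOpts_sum]
            exact List.mem_append_left _ (List.mem_map_of_mem hB)
          have := rightScore_le_leftScore hmemB
          rw [(ih B (by have := sizeOf_lt_left hB; omega)).2] at this
          linarith [he ▸ this]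
    · by_cases hnil : G.rightOpts = []
      case pos =>
        have hnil2 : (G.sum (mk [] [] c)).rightOpts = [] := by
          rw [rightOpts_sum, hnil]; simp [rightOpts]
        rw [rightScore_of_no_right hnil, rightScore_of_no_right hnil2, score_sum]; rfl
      case neg =>
        have hne : G.rightOpts ≠ [] := hnil
        have hne2 : (G.sum (mk [] [] c)).rightOpts ≠ [] := by
          rw [rightOpts_sum]
          simp only [ne_eq, List.append_eq_nil_iff, List.map_eq_nil_iff]
          intro ⟨h1, _⟩; exact hne h1
        apply le_antisymm
        · obtain ⟨B, hB, he⟩ := rightScore_mem hne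
          have hmemB : B.sum (mk [] [] c) ∈ (G.sum (mk [] [] c)).rightOpts := by
            rw [rightOpts_sum]
            exact List.mem_append_left _ (List.mem_map_of_mem hB)
          have := rightScore_le_leftScore' hmemB
          rw [(ih B (by have := sizeOf_lt_right hB; omega)).1] at this
          linarith [he ▸ this]
        · obtain ⟨g, hg, he⟩ := rightScore_mem hne2
          obtain ⟨B, hB, rfl⟩ := hmem' g hg
          rw [he, (ih B (by have := sizeOf_lt_right hB; omega)).1]
          have := rightScore_le_leftScore' hB
          linarith

end SGame
namespace SGame

lemma P_leftScore_iff {P : ℝ → Prop} (hP : ∀ a b : ℝ, a ≤ b → P a → P b) {Y : SGame}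
    (hne : Y.leftOpts ≠ []) : P Y.leftScore ↔ ∃ g ∈ Y.leftOpts, P g.rightScore := by
  constructor
  · intro hp
    obtain ⟨g, hg, he⟩ := leftScore_mem hne
    exact ⟨g, hg, he ▸ hp⟩
  · rintro ⟨g, hg, hp⟩
    exact hP _ _ (rightScore_le_leftScore hg) hp

lemma P_rightScore_iff {P : ℝ → Prop} (hP : ∀ a b : ℝ, a ≤ b → P a → P b) {Y : SGame}
    (hne : Y.rightOpts ≠ []) : P Y.rightScore ↔ ∀ d ∈ Y.rightOpts, P d.leftScore := by
  constructor
  · intro hp d hd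
    exact hP _ _ (rightScore_le_leftScore' hd) hp
  · intro hall
    obtain ⟨d, hd, he⟩ := rightScore_mem hne
    exact he ▸ hall d hd

lemma exists_bound (l : List SGame) : ∃ M : ℝ, ∀ B ∈ l, B.leftScore ≤ M := by
  induction l with
  | nil => exact ⟨0, by simp⟩
  | cons a t ih =>
    obtain ⟨M, hM⟩ := ih
    refine ⟨max a.leftScore M, ?_⟩
    intro B hB
    rcases List.mem_cons.1 hB with rfl | hB
    · exact le_max_left _ _
    · exact le_max_of_le_right (hM B hB)

/-- If `Ar` has no Left options, it cannot satisfy `Ar ≤ G` for `G` with a Left option. -/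
lemma no_left_not_le {Ar : SGame} (hArL : Ar.leftOpts = []) (A : SGame) (Lrest R : List SGame)
    (s : ℝ) (h : Le Ar (mk (A :: Lrest) R s)) : False := by
  obtain ⟨M, hM⟩ := exists_bound (A :: Lrest)
  set c : ℝ := -M - 1 with hc
  set z : SGame := mk [] [] c with hz
  set X₁ : SGame := mk [] [z] (-Ar.score) with hX
  have hArX : (Ar.sum X₁).leftScore = 0 := by
    have hnil : (Ar.sum X₁).leftOpts = [] := by
      rw [leftOpts_sum, hArL]; simp [leftOpts, hX]
    rw [leftScore_of_no_left hnil, score_sum]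
    show Ar.score + (-Ar.score) = 0
    ring
  have h3 := (h X₁).2.2.1
  have hge : 0 ≤ ((mk (A :: Lrest) R s).sum X₁).leftScore := by
    by_contra hlt
    have := h3 (by linarith)
    rw [hArX] at this; exact lt_irrefl 0 this
  have hne : ((mk (A :: Lrest) R s).sum X₁).leftOpts ≠ [] := by
    rw [leftOpts_sum]
    simp [leftOpts]
  obtain ⟨g, hg, he⟩ := leftScore_mem hne
  rw [leftOpts_sum] at hg
  have hXL : X₁.leftOpts = [] := rfl
  rw [hXL] at hg
  simp only [List.map_nil, List.append_nil, List.mem_map] at hg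
  obtain ⟨B, hB, rfl⟩ := hg
  have hmemz : B.sum z ∈ (B.sum X₁).rightOpts := by
    rw [rightOpts_sum]
    apply List.mem_append_right
    have : X₁.rightOpts = [z] := rfl
    rw [this]; simp
  have h1 : (B.sum X₁).rightScore ≤ (B.sum z).leftScore := rightScore_le_leftScore' hmemz
  have h2 : (B.sum z).leftScore = B.leftScore + c := (shift_scores c B).1
  have hBle : B.leftScore ≤ M := hM B (by simpa [leftOpts] using hB)
  rw [he] at hge
  rw [h2] at h1
  have : (0:ℝ) ≤ M + c := by linarith
  rw [hc] at this; linarith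

end SGame
namespace SGame

@[simp] lemma leftOpts_mk (L R : List SGame) (s : ℝ) : (mk L R s).leftOpts = L := rfl
@[simp] lemma rightOpts_mk (L R : List SGame) (s : ℝ) : (mk L R s).rightOpts = R := rfl
@[simp] lemma score_mk (L R : List SGame) (s : ℝ) : (mk L R s).score = s := rfl

lemma main_iff {A Ar : SGame} (hAr : Ar ∈ A.rightOpts) (hArL : Ar.leftOpts ≠ [])
    (Lrest R : List SGame) (s : ℝ) {P : ℝ → Prop} (hP : ∀ a b : ℝ, a ≤ b → P a → P b)
    (hLe1 : ∀ Y : SGame, P (Ar.sum Y).leftScore → P (((mk (A::Lrest) R s).sum Y).leftScore))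
    (hLe2 : ∀ Y : SGame, P (Ar.sum Y).rightScore → P (((mk (A::Lrest) R s).sum Y).rightScore)) :
    ∀ X : SGame,
      (P (((mk (A::Lrest) R s).sum X).leftScore) ↔
        P (((mk (Ar.leftOpts ++ Lrest) R s).sum X).leftScore)) ∧
      (P (((mk (A::Lrest) R s).sum X).rightScore) ↔
        P (((mk (Ar.leftOpts ++ Lrest) R s).sum X).rightScore)) := by
  set G : SGame := mk (A::Lrest) R s with hG
  set G' : SGame := mk (Ar.leftOpts ++ Lrest) R s with hG'
  suffices H : ∀ (n : ℕ) (X : SGame), sizeOf X < n →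
      (P ((G.sum X).leftScore) ↔ P ((G'.sum X).leftScore)) ∧
      (P ((G.sum X).rightScore) ↔ P ((G'.sum X).rightScore)) by
    exact fun X => H (sizeOf X + 1) X (by omega)
  intro n
  induction n with
  | zero => intro X hX; omega
  | succ n ih =>
    intro X hX
    have ihx : ∀ x, sizeOf x < sizeOf X →
        (P ((G.sum x).leftScore) ↔ P ((G'.sum x).leftScore)) ∧
        (P ((G.sum x).rightScore) ↔ P ((G'.sum x).rightScore)) := by
      intro x hx; exact ih x (by omega)
    constructor
    · -- leftScore part
      have hne1 : (G.sum X).leftOpts ≠ [] := by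
        rw [leftOpts_sum, hG]; simp
      have hne2 : (G'.sum X).leftOpts ≠ [] := by
        rw [leftOpts_sum, hG']
        simp only [leftOpts_mk, ne_eq, List.append_eq_nil_iff, List.map_eq_nil_iff,
          not_and]
        intro hc; exact absurd hc.1 hArL
      constructor
      · intro hp
        obtain ⟨g, hg, hpg⟩ := (P_leftScore_iff hP hne1).1 hp
        rw [leftOpts_sum] at hg
        rcases List.mem_append.1 hg with hg | hg
        · obtain ⟨B, hB, rfl⟩ := List.mem_map.1 hg
          rw [hG] at hB; simp only [leftOpts_mk] at hB
          rcases List.mem_cons.1 hB with rfl | hB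
          · -- B = A : the reversible option
            have hArm : Ar.sum X ∈ (B.sum X).rightOpts := by
              rw [rightOpts_sum]
              exact List.mem_append_left _ (List.mem_map_of_mem hAr)
            have hpAr : P (Ar.sum X).leftScore :=
              hP _ _ (rightScore_le_leftScore' hArm) hpg
            have hneAr : (Ar.sum X).leftOpts ≠ [] := by
              rw [leftOpts_sum]
              simp only [ne_eq, List.append_eq_nil_iff, List.map_eq_nil_iff, not_and]
              intro hc; exact absurd hc hArL
            obtain ⟨w, hw, hpw⟩ := (P_leftScore_iff hP hneAr).1 hpAr
            rw [leftOpts_sum] at hw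
            rcases List.mem_append.1 hw with hw | hw
            · obtain ⟨W, hW, rfl⟩ := List.mem_map.1 hw
              refine (P_leftScore_iff hP hne2).2 ⟨W.sum X, ?_, hpw⟩
              rw [leftOpts_sum]
              refine List.mem_append_left _ (List.mem_map_of_mem ?_)
              rw [hG']; simp only [leftOpts_mk]
              exact List.mem_append_left _ hW
            · obtain ⟨x, hx, rfl⟩ := List.mem_map.1 hw
              have hpx : P (G.sum x).rightScore := hLe2 x hpw
              have hpx' : P (G'.sum x).rightScore :=
                (ihx x (sizeOf_lt_left hx)).2.1 hpx
              refine (P_leftScore_iff hP hne2).2 ⟨G'.sum x, ?_, hpx'⟩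
              rw [leftOpts_sum]
              exact List.mem_append_right _ (List.mem_map_of_mem hx)
          · refine (P_leftScore_iff hP hne2).2 ⟨B.sum X, ?_, hpg⟩
            rw [leftOpts_sum]
            refine List.mem_append_left _ (List.mem_map_of_mem ?_)
            rw [hG']; simp only [leftOpts_mk]
            exact List.mem_append_right _ hB
        · obtain ⟨x, hx, rfl⟩ := List.mem_map.1 hg
          have hpx' : P (G'.sum x).rightScore :=
            (ihx x (sizeOf_lt_left hx)).2.1 hpg
          refine (P_leftScore_iff hP hne2).2 ⟨G'.sum x, ?_, hpx'⟩
          rw [leftOpts_sum]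
          exact List.mem_append_right _ (List.mem_map_of_mem hx)
      · intro hp
        obtain ⟨g, hg, hpg⟩ := (P_leftScore_iff hP hne2).1 hp
        rw [leftOpts_sum] at hg
        rcases List.mem_append.1 hg with hg | hg
        · obtain ⟨B, hB, rfl⟩ := List.mem_map.1 hg
          rw [hG'] at hB; simp only [leftOpts_mk] at hB
          rcases List.mem_append.1 hB with hB | hB
          · -- B ∈ Ar.leftOpts
            have hBm : B.sum X ∈ (Ar.sum X).leftOpts := by
              rw [leftOpts_sum]
              exact List.mem_append_left _ (List.mem_map_of_mem hB)
            have : P (Ar.sum X).leftScore :=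
              hP _ _ (rightScore_le_leftScore hBm) hpg
            exact hLe1 X this
          · -- B ∈ Lrest
            have hBm : B.sum X ∈ (G.sum X).leftOpts := by
              rw [leftOpts_sum]
              refine List.mem_append_left _ (List.mem_map_of_mem ?_)
              rw [hG]; simp only [leftOpts_mk]
              exact List.mem_cons_of_mem _ hB
            exact hP _ _ (rightScore_le_leftScore hBm) hpg
        · obtain ⟨x, hx, rfl⟩ := List.mem_map.1 hg
          have hpx : P (G.sum x).rightScore :=
            (ihx x (sizeOf_lt_left hx)).2.2 hpg
          have hm : G.sum x ∈ (G.sum X).leftOpts := by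
            rw [leftOpts_sum]
            exact List.mem_append_right _ (List.mem_map_of_mem hx)
          exact hP _ _ (rightScore_le_leftScore hm) hpx
    · -- rightScore part
      by_cases hE : R = [] ∧ X.rightOpts = []
      · have e1 : (G.sum X).rightOpts = [] := by
          rw [rightOpts_sum, hG]; simp [hE.1, hE.2]
        have e2 : (G'.sum X).rightOpts = [] := by
          rw [rightOpts_sum, hG']; simp [hE.1, hE.2]
        rw [rightScore_of_no_right e1, rightScore_of_no_right e2, score_sum, score_sum,
          hG, hG']
        simp
      · have hne : ¬(R = [] ∧ X.rightOpts = []) := hE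
        have hne1 : (G.sum X).rightOpts ≠ [] := by
          rw [rightOpts_sum, hG]
          simp only [rightOpts_mk, ne_eq, List.append_eq_nil_iff, List.map_eq_nil_iff]
          exact hne
        have hne2 : (G'.sum X).rightOpts ≠ [] := by
          rw [rightOpts_sum, hG']
          simp only [rightOpts_mk, ne_eq, List.append_eq_nil_iff, List.map_eq_nil_iff]
          exact hne
        rw [P_rightScore_iff hP hne1, P_rightScore_iff hP hne2]
        constructor
        · intro hall d hd
          rw [rightOpts_sum] at hd
          rcases List.mem_append.1 hd with hd | hd
          · obtain ⟨D, hD, rfl⟩ := List.mem_map.1 hd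
            rw [hG'] at hD; simp only [rightOpts_mk] at hD
            refine hall (D.sum X) ?_
            rw [rightOpts_sum]
            refine List.mem_append_left _ (List.mem_map_of_mem ?_)
            rw [hG]; simpa only [rightOpts_mk]
          · obtain ⟨x, hx, rfl⟩ := List.mem_map.1 hd
            have h1 : P (G.sum x).leftScore := by
              refine hall (G.sum x) ?_
              rw [rightOpts_sum]
              exact List.mem_append_right _ (List.mem_map_of_mem hx)
            exact (ihx x (sizeOf_lt_right hx)).1.1 h1
        · intro hall d hd
          rw [rightOpts_sum] at hd
          rcases List.mem_append.1 hd with hd | hd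
          · obtain ⟨D, hD, rfl⟩ := List.mem_map.1 hd
            rw [hG] at hD; simp only [rightOpts_mk] at hD
            refine hall (D.sum X) ?_
            rw [rightOpts_sum]
            refine List.mem_append_left _ (List.mem_map_of_mem ?_)
            rw [hG']; simpa only [rightOpts_mk]
          · obtain ⟨x, hx, rfl⟩ := List.mem_map.1 hd
            have h1 : P (G'.sum x).leftScore := by
              refine hall (G'.sum x) ?_
              rw [rightOpts_sum]
              exact List.mem_append_right _ (List.mem_map_of_mem hx)
            exact (ihx x (sizeOf_lt_right hx)).1.2 h1

end SGame
namespace SGame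

lemma outcome_congr {G H : SGame}
    (h1 : 0 ≤ G.leftScore ↔ 0 ≤ H.leftScore) (h2 : 0 < G.leftScore ↔ 0 < H.leftScore)
    (h3 : 0 ≤ G.rightScore ↔ 0 ≤ H.rightScore) (h4 : 0 < G.rightScore ↔ 0 < H.rightScore) :
    G.outcome = H.outcome := by
  have e1 : G.leftScore = 0 ↔ H.leftScore = 0 := by
    constructor
    · intro e
      have ha := h1.1 (le_of_eq e.symm)
      have hb : ¬ 0 < H.leftScore := fun hc => by
        have := h2.2 hc; linarith
      linarith [lt_or_eq_of_le ha]
    · intro e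
      have ha := h1.2 (le_of_eq e.symm)
      have hb : ¬ 0 < G.leftScore := fun hc => by
        have := h2.1 hc; linarith
      linarith [lt_or_eq_of_le ha]
  have e2 : G.rightScore = 0 ↔ H.rightScore = 0 := by
    constructor
    · intro e
      have ha := h3.1 (le_of_eq e.symm)
      have hb : ¬ 0 < H.rightScore := fun hc => by
        have := h4.2 hc; linarith
      linarith [lt_or_eq_of_le ha]
    · intro e
      have ha := h3.2 (le_of_eq e.symm)
      have hb : ¬ 0 < G.rightScore := fun hc => by
        have := h4.1 hc; linarith
      linarith [lt_or_eq_of_le ha]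
  unfold outcome
  simp only [propext h2, propext e1, propext h4, propext e2]

end SGame
/-- Bypassing a reversible Left option preserves equality: if `A` is a Left
option of `G` with a Right option `Ar ≤ G`, then replacing `A` by the Left
options of `Ar` gives an equal game. -/
theorem bypass_reversible_left (A Ar : SGame) (hAr : Ar ∈ A.rightOpts)
    (Lrest R : List SGame) (s : ℝ)
    (h : SGame.Le Ar (SGame.mk (A :: Lrest) R s)) :
    SGame.gameEq (SGame.mk (A :: Lrest) R s)
      (SGame.mk (Ar.leftOpts ++ Lrest) R s) := by
  by_cases hArL : Ar.leftOpts = []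
  · exact absurd (SGame.no_left_not_le hArL A Lrest R s h) (fun x => x)
  · intro X
    have hLe1a : ∀ Y : SGame, 0 ≤ (Ar.sum Y).leftScore →
        0 ≤ (((SGame.mk (A::Lrest) R s)).sum Y).leftScore := by
      intro Y hy
      by_contra hc
      have := (h Y).2.2.1 (by linarith)
      linarith
    have hLe2a : ∀ Y : SGame, 0 ≤ (Ar.sum Y).rightScore →
        0 ≤ (((SGame.mk (A::Lrest) R s)).sum Y).rightScore := by
      intro Y hy
      by_contra hc
      have := (h Y).2.2.2 (by linarith)
      linarith
    have hLe1b : ∀ Y : SGame, 0 < (Ar.sum Y).leftScore →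
        0 < (((SGame.mk (A::Lrest) R s)).sum Y).leftScore := by
      intro Y hy
      by_contra hc
      have := (h Y).1 (by linarith)
      linarith
    have hLe2b : ∀ Y : SGame, 0 < (Ar.sum Y).rightScore →
        0 < (((SGame.mk (A::Lrest) R s)).sum Y).rightScore := by
      intro Y hy
      by_contra hc
      have := (h Y).2.1 (by linarith)
      linarith
    have Ha := SGame.main_iff hAr hArL Lrest R s
      (P := fun t => 0 ≤ t) (fun a b hab ha => le_trans ha hab) hLe1a hLe2a X
    have Hb := SGame.main_iff hAr hArL Lrest R s
      (P := fun t => 0 < t) (fun a b hab ha => lt_of_lt_of_le ha hab) hLe1b hLe2b X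
    exact SGame.outcome_congr Ha.1 Hb.1 Ha.2 Hb.2
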